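/- Let F be a finite field, let A = F[T] be the polynomial ring over F in one variable T, and let f ∈ F[X] be a monic irreducible polynomial of degree n. If M and N are n × n matrices with entries in A such that the characteristic polynomial of M and the characteristic polynomial of N both equal the image of f under the coefficient embedding F[X] → A[X], then M and N are conjugate by a matrix in GL_n(A): there exists P ∈ GL_n(A) with N = P M P^{−1}. -/

import Mathlib

open Polynomial

theorem stmt8_aux {F : Type*} [Field F] {n : ℕ} (f : F[X]) (hmonic : f.Monic)
    (hirr : Irreducible f) (hdeg : f.natDegree = n)
    (M : Matrix (Fin n) (Fin n) F[X])
    (hM : M.charpoly = f.map (C : F →+* F[X])) :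
    ∃ e : (Fin n → F[X]) ≃+ Polynomial (AdjoinRoot f),
      (∀ (a : F[X]) (v : Fin n → F[X]),
          e (a • v) = a.map (algebraMap F (AdjoinRoot f)) * e v) ∧
      (∀ v : Fin n → F[X], e (M.mulVec v) = Polynomial.C (AdjoinRoot.root f) * e v) := by
  haveI : Fact (Irreducible f) := ⟨hirr⟩
  classical
  have hn : n ≠ 0 := by
    rw [← hdeg]
    exact hirr.natDegree_pos.ne'
  set K := AdjoinRoot f with hK
  -- Cayley–Hamilton
  have hfM : (aeval M) f = 0 := by
    have h := Matrix.aeval_self_charpoly M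
    rw [hM] at h
    rwa [← Polynomial.algebraMap_eq, Polynomial.aeval_map_algebraMap] at h
  -- the action of K by polynomials in M
  let ρ : K →+* Matrix (Fin n) (Fin n) F[X] :=
    Ideal.Quotient.lift (Ideal.span {f}) ((aeval M : F[X] →ₐ[F] _) : F[X] →+* _)
      (by
        intro a ha
        rw [Ideal.mem_span_singleton] at ha
        obtain ⟨c, rfl⟩ := ha
        simp [map_mul, hfM])
  have hρ_mk : ∀ p : F[X], ρ (AdjoinRoot.mk f p) = aeval M p := fun p => rfl
  have hρ_root : ρ (AdjoinRoot.root f) = M := by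
    rw [AdjoinRoot.root, hρ_mk, aeval_X]
  have hρ_alg : ∀ c : F, ρ (algebraMap F K c) = Matrix.scalar (Fin n) (Polynomial.C c) := by
    intro c
    rw [AdjoinRoot.algebraMap_eq, AdjoinRoot.of, RingHom.comp_apply, hρ_mk, aeval_C]
    rw [Matrix.scalar_apply, Matrix.algebraMap_eq_diagonal]
    rfl
  have hcomm : ∀ k : K, Commute (ρ k) (Matrix.scalar (Fin n) (X : F[X])) := by
    intro k
    exact (Matrix.scalar_commute _ (fun r => Commute.all _ _) _).symm
  -- the action of K[T]
  let σ : Polynomial K →+* Matrix (Fin n) (Fin n) F[X] :=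
    eval₂RingHom' ρ (Matrix.scalar (Fin n) (X : F[X])) hcomm
  have hσC : ∀ k : K, σ (Polynomial.C k) = ρ k := fun k => eval₂_C _ _
  have hστ : ∀ a : F[X], σ (a.map (algebraMap F K)) = Matrix.scalar (Fin n) a := by
    intro a
    show eval₂ ρ _ _ = _
    rw [eval₂_map]
    have h1 : (ρ.comp (algebraMap F K))
        = (Matrix.scalar (Fin n)).comp (Polynomial.C : F →+* F[X]) := by
      ext c
      simp [hρ_alg]
    rw [h1]
    have h2 := Polynomial.hom_eval₂ a (Polynomial.C : F →+* F[X])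
      (Matrix.scalar (Fin n)) (X : F[X])
    rw [← h2]
    congr 1
    exact Polynomial.eval₂_C_X
  letI instR : Module (Polynomial K) (Fin n → F[X]) :=
    Module.compHom _
      ((Matrix.toLinAlgEquiv' : Matrix (Fin n) (Fin n) F[X] ≃ₐ[F[X]] _).toAlgHom.toRingHom.comp σ)
  have hsmul_def : ∀ (p : Polynomial K) (v : Fin n → F[X]), p • v = (σ p).mulVec v := by
    intro p v; rfl
  have hτ : ∀ (a : F[X]) (v : Fin n → F[X]), (a.map (algebraMap F K)) • v = a • v := by
    intro a v
    rw [hsmul_def, hστ, Matrix.scalar_apply]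
    ext i
    simp [Matrix.mulVec_diagonal]
  -- finiteness over K[T]
  haveI hfin : Module.Finite (Polynomial K) (Fin n → F[X]) := by
    constructor
    rw [Submodule.fg_def]
    refine ⟨Set.range (fun i : Fin n => (fun j => if i = j then (1:F[X]) else 0)),
      Set.finite_range _, ?_⟩
    rw [eq_top_iff]
    intro v _
    rw [pi_eq_sum_univ v]
    refine Submodule.sum_mem _ (fun i _ => ?_)
    rw [← hτ]
    exact Submodule.smul_mem _ _ (Submodule.subset_span ⟨i, rfl⟩)
  -- torsion-freeness over K[T]
  haveI htf : NoZeroSMulDivisors (Polynomial K) (Fin n → F[X]) := by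
    refine ⟨fun {p v} hpv => ?_⟩
    by_cases hp : p = 0
    · exact Or.inl hp
    refine Or.inr ?_
    set I : Ideal (Polynomial K) :=
      LinearMap.ker (LinearMap.toSpanSingleton (Polynomial K) (Fin n → F[X]) v) with hI
    obtain ⟨g, hg⟩ := (IsPrincipalIdealRing.principal I)
    have hpI : p ∈ I := by
      rw [LinearMap.mem_ker, LinearMap.toSpanSingleton_apply]
      exact hpv
    have hg0 : g ≠ 0 := by
      rintro rfl
      rw [hg, Ideal.submodule_span_eq, Ideal.span_singleton_eq_bot.mpr rfl] at hpI
      exact hp ((Submodule.mem_bot _).mp hpI)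
    haveI : Module.Finite K (AdjoinRoot g) :=
      Module.Finite.of_basis (AdjoinRoot.powerBasis hg0).basis
    haveI : Module.Finite F K :=
      Module.Finite.of_basis (AdjoinRoot.powerBasis hmonic.ne_zero).basis
    haveI : Module.Finite F (AdjoinRoot g) := Module.Finite.trans K _
    have hint : IsIntegral F (AdjoinRoot.root g) := IsIntegral.of_finite F _
    obtain ⟨a, aMonic, ha⟩ := hint
    have haI : a.map (algebraMap F K) ∈ I := by
      rw [hg, Ideal.submodule_span_eq, Ideal.mem_span_singleton]
      rw [← AdjoinRoot.mk_eq_zero]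
      have h3 : AdjoinRoot.mk g (a.map (algebraMap F K))
          = aeval (AdjoinRoot.root g) (a.map (algebraMap F K)) := (AdjoinRoot.aeval_eq _).symm
      rw [h3, Polynomial.aeval_map_algebraMap]
      exact ha
    have hav : a • v = 0 := by
      rw [← hτ]
      rw [hI, LinearMap.mem_ker, LinearMap.toSpanSingleton_apply] at haI
      exact haI
    rcases smul_eq_zero.mp hav with h | h
    · exact absurd h aMonic.ne_zero
    · exact h
  -- basis of K[T] over F[X]
  letI instA : Module F[X] (Polynomial K) :=
    Module.compHom _ (Polynomial.mapRingHom (algebraMap F K))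
  have hτsmul : ∀ (a : F[X]) (p : Polynomial K),
      a • p = a.map (algebraMap F K) * p := fun a p => rfl
  let bK : Module.Basis (Fin n) F K :=
    ((AdjoinRoot.powerBasis hmonic.ne_zero).basis).reindex (finCongr hdeg)
  let w : Fin n → Polynomial K := fun i => Polynomial.C (bK i)
  have li : LinearIndependent F[X] w := by
    rw [linearIndependent_iff']
    intro s g hsum i hi
    ext j
    have hcoeff : ∑ i ∈ s, ((g i).coeff j) • bK i = 0 := by
      have h := congrArg (fun q => Polynomial.coeff q j) hsum
      simp only [Polynomial.finset_sum_coeff, Polynomial.coeff_zero] at h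
      rw [← h]
      refine Finset.sum_congr rfl (fun i _ => ?_)
      show (g i).coeff j • bK i = (g i • Polynomial.C (bK i)).coeff j
      rw [hτsmul, Polynomial.coeff_mul_C, Polynomial.coeff_map, Algebra.smul_def]
    have h4 := linearIndependent_iff'.mp bK.linearIndependent s
      (fun i => (g i).coeff j) hcoeff i hi
    simpa using h4
  have sp0 : ∀ p : Polynomial K, p ∈ Submodule.span F[X] (Set.range w) := by
    intro p
    induction p using Polynomial.induction_on' with
    | add p q hp hq => exact Submodule.add_mem _ hp hq
    | monomial k c =>
      have hterm : ∀ i : Fin n, (Polynomial.monomial k (bK.repr c i) : F[X]) • w i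
          = Polynomial.monomial k (bK.repr c i • bK i) := by
        intro i
        show (Polynomial.monomial k (bK.repr c i) : F[X]) • Polynomial.C (bK i) = _
        rw [hτsmul, Polynomial.map_monomial, Polynomial.monomial_mul_C, ← Algebra.smul_def]
      have hc : (Polynomial.monomial k c : Polynomial K)
          = ∑ i, (Polynomial.monomial k (bK.repr c i) : F[X]) • w i := by
        calc (Polynomial.monomial k c : Polynomial K)
            = Polynomial.monomial k (∑ i, bK.repr c i • bK i) := by rw [Module.Basis.sum_repr]
          _ = ∑ i, Polynomial.monomial k (bK.repr c i • bK i) := map_sum _ _ _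
          _ = ∑ i, (Polynomial.monomial k (bK.repr c i) : F[X]) • w i :=
              (Finset.sum_congr rfl (fun i _ => (hterm i).symm))
      rw [hc]
      exact Submodule.sum_mem _ (fun i _ => Submodule.smul_mem _ _
        (Submodule.subset_span ⟨i, rfl⟩))
  have sp : ⊤ ≤ Submodule.span F[X] (Set.range w) := fun p _ => sp0 p
  let bAR : Module.Basis (Fin n) F[X] (Polynomial K) := Module.Basis.mk li sp
  obtain ⟨r, bV⟩ :=
    Module.basisOfFiniteTypeTorsionFree' (R := Polynomial K) (M := Fin n → F[X])
  let eA : (Fin n → F[X]) ≃ₗ[F[X]] (Fin r →₀ Polynomial K) :=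
    { bV.repr.toAddEquiv with
      map_smul' := by
        intro a v
        show bV.repr (a • v) = a • bV.repr v
        rw [← hτ a v, LinearEquiv.map_smul]
        ext i
        rw [Finsupp.smul_apply, Finsupp.smul_apply]
        rfl }
  let bAV : Module.Basis ((_ : Fin r) × Fin n) F[X] (Fin n → F[X]) :=
    (Finsupp.basis (fun _ : Fin r => bAR)).map eA.symm
  have hcard : n = r * n := by
    have e0 := (Pi.basisFun F[X] (Fin n)).indexEquiv bAV
    have h5 := Fintype.card_congr e0
    simpa [Fintype.card_sigma, Finset.sum_const, Finset.card_univ] using h5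
  have hr : r = 1 :=
    Nat.eq_of_mul_eq_mul_right (Nat.pos_of_ne_zero hn) (by rw [← hcard, one_mul])
  subst hr
  let eR : (Fin n → F[X]) ≃ₗ[Polynomial K] Polynomial K :=
    bV.repr.trans (Finsupp.LinearEquiv.finsuppUnique (Polynomial K) (Polynomial K) (Fin 1))
  refine ⟨eR.toAddEquiv, ?_, ?_⟩
  · intro a v
    show eR (a • v) = _
    rw [← hτ a v, LinearEquiv.map_smul, smul_eq_mul]
    rfl
  · intro v
    have hMv : M.mulVec v = (Polynomial.C (AdjoinRoot.root f) : Polynomial K) • v := by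
      rw [hsmul_def, hσC, hρ_root]
    show eR (M.mulVec v) = _
    rw [hMv, LinearEquiv.map_smul, smul_eq_mul]
    rfl

/-- Over `A = F[T]` (`F` a finite field), any two `n × n` matrices whose
characteristic polynomial equals (the image in `A[X]` of) a fixed monic
irreducible polynomial `f ∈ F[X]` of degree `n` are conjugate by an element of
`GL_n(A)`. -/
theorem stmt_8 (F : Type*) [Field F] [Finite F] (n : ℕ)
    (f : F[X]) (hmonic : f.Monic) (hirr : Irreducible f) (hdeg : f.natDegree = n)
    (M N : Matrix (Fin n) (Fin n) F[X])
    (hM : M.charpoly = f.map (Polynomial.C : F →+* F[X]))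
    (hN : N.charpoly = f.map (Polynomial.C : F →+* F[X])) :
    ∃ P : Matrix (Fin n) (Fin n) F[X], IsUnit P.det ∧ N = P * M * P⁻¹ := by
  classical
  obtain ⟨eM, hMa, hMm⟩ := stmt8_aux f hmonic hirr hdeg M hM
  obtain ⟨eN, hNa, hNm⟩ := stmt8_aux f hmonic hirr hdeg N hN
  let g : (Fin n → F[X]) ≃+ (Fin n → F[X]) := eM.trans eN.symm
  have hga : ∀ (a : F[X]) (v : Fin n → F[X]), g (a • v) = a • g v := by
    intro a v
    show eN.symm (eM (a • v)) = a • eN.symm (eM v)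
    rw [hMa]
    have h1 := hNa a (eN.symm (eM v))
    rw [AddEquiv.apply_symm_apply] at h1
    rw [← h1, AddEquiv.symm_apply_apply]
  have hgm : ∀ v : Fin n → F[X], g (M.mulVec v) = N.mulVec (g v) := by
    intro v
    show eN.symm (eM (M.mulVec v)) = N.mulVec (eN.symm (eM v))
    rw [hMm]
    have h1 := hNm (eN.symm (eM v))
    rw [AddEquiv.apply_symm_apply] at h1
    rw [← h1, AddEquiv.symm_apply_apply]
  have hga' : ∀ (a : F[X]) (v : Fin n → F[X]), g.symm (a • v) = a • g.symm v := by
    intro a v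
    apply g.injective
    rw [hga, AddEquiv.apply_symm_apply, AddEquiv.apply_symm_apply]
  let gl : (Fin n → F[X]) →ₗ[F[X]] (Fin n → F[X]) :=
    { toFun := g, map_add' := g.map_add, map_smul' := hga }
  let gl' : (Fin n → F[X]) →ₗ[F[X]] (Fin n → F[X]) :=
    { toFun := g.symm, map_add' := g.symm.map_add, map_smul' := hga' }
  let P := LinearMap.toMatrix' gl
  let Q := LinearMap.toMatrix' gl'
  have hPQ : P * Q = 1 := by
    rw [show P * Q = LinearMap.toMatrix' (gl ∘ₗ gl') from (LinearMap.toMatrix'_comp _ _).symm]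
    rw [show gl ∘ₗ gl' = LinearMap.id from ?_, LinearMap.toMatrix'_id]
    refine LinearMap.ext fun v => ?_
    exact g.apply_symm_apply v
  have hdet : IsUnit P.det := by
    apply IsUnit.of_mul_eq_one Q.det
    rw [← Matrix.det_mul, hPQ, Matrix.det_one]
  refine ⟨P, hdet, ?_⟩
  have hPM : P * M = N * P := by
    have h2 : gl ∘ₗ Matrix.toLin' M = Matrix.toLin' N ∘ₗ gl := by
      refine LinearMap.ext fun v => ?_
      simp only [LinearMap.comp_apply, Matrix.toLin'_apply]
      exact hgm v
    have h3 := congrArg LinearMap.toMatrix' h2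
    simp only [LinearMap.toMatrix'_comp, LinearMap.toMatrix'_toLin'] at h3
    exact h3
  calc N = N * P * P⁻¹ := by rw [Matrix.mul_assoc, Matrix.mul_nonsing_inv _ hdet, mul_one]
    _ = P * M * P⁻¹ := by rw [← hPM]
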